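/- Let q be a prime power, let n, m be positive integers with n | m, and let σ : x ↦ x^{q^s} with gcd(s,m)=1. Let 𝒞 be a set of σ-linearized polynomials over F_{q^m}, let β ∈ F_{q^m}^*, let α_1,…,α_n be an F_q-basis of βF_{q^n}, let C = {(g(α_1),…,g(α_n)) : g ∈ 𝒞} ⊆ F_{q^m}^n, and let d be its minimum rank distance. Suppose there is a positive integer t such that: (1) ⌊(d−1)/2⌋ + 1 ≤ t ≤ d−1; (2) t | n and n−2t+1 ≥ 1; (3) (𝒢_{n,n−2t+1,σ})^{σ^j} = { Σ_{i=j}^{j+n−2t} a_i x^{σ^i} : a_i ∈ F_{q^m} } ⊆ 𝒞 for some integer j with 0 ≤ j < t−1. Then there exists a word w ∈ F_{q^m}^n ∖ C such that |C ∩ B_t(w)| ≥ (q^n−1)/(q^t−1). -/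

import Mathlib

section AuxQ

variable {K : Type} [Field K] {p a q : ℕ} [hfp : Fact p.Prime] [CharP K p]

lemma qpow_inj (hq : q = p ^ a) (c : ℕ) : Function.Injective (fun x : K => x ^ q ^ c) := by
  intro x y h
  simp only at h
  have hq' : q ^ c = p ^ (a * c) := by rw [hq, pow_mul]
  have h2 : (x - y) ^ p ^ (a * c) = 0 := by
    rw [sub_pow_char_pow, ← hq', h, sub_self]
  have h3 := pow_eq_zero_iff (pow_ne_zero _ hfp.out.ne_zero) |>.mp h2
  exact sub_eq_zero.mp h3

lemma qpow_fixed_mul {x : K} {b : ℕ} (h : x ^ q ^ b = x) (k : ℕ) : x ^ q ^ (b * k) = x := by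
  induction k with
  | zero => simp
  | succ k ih =>
    have : q ^ (b * (k+1)) = q ^ (b * k) * q ^ b := by ring
    rw [this, pow_mul, ih, h]

lemma qpow_fixed_gcd (hq : q = p ^ a) {x : K} {b c : ℕ} (hb : x ^ q ^ b = x)
    (hc : x ^ q ^ c = x) : x ^ q ^ (Nat.gcd b c) = x := by
  induction b, c using Nat.gcd.induction generalizing x with
  | H0 c => simpa using hc
  | H1 b c hbpos ih =>
    rw [Nat.gcd_rec]
    apply ih
    · have hmod : b * (c / b) + c % b = c := Nat.div_add_mod c b
      have h1 : x ^ q ^ c = (x ^ q ^ (c % b)) ^ q ^ (b * (c / b)) := by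
        rw [← pow_mul, ← pow_add, Nat.add_comm, hmod]
      have h2 : (x ^ q ^ (c % b)) ^ q ^ (b * (c / b)) = x ^ q ^ (b * (c / b)) := by
        rw [← h1, hc, qpow_fixed_mul hb]
      exact qpow_inj hq (b * (c / b)) h2
    · exact hb

lemma qpow_mod {x : K} {nn E : ℕ} (h : x ^ q ^ nn = x) : x ^ q ^ E = x ^ q ^ (E % nn) := by
  rcases Nat.eq_zero_or_pos nn with h0 | h0
  · simp [h0]
  · have hmod : nn * (E / nn) + E % nn = E := Nat.div_add_mod E nn
    calc x ^ q ^ E = (x ^ q ^ (nn * (E / nn))) ^ q ^ (E % nn) := by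
          rw [← pow_mul, ← pow_add, hmod]
      _ = x ^ q ^ (E % nn) := by rw [qpow_fixed_mul h]

end AuxQ

lemma sum_mults {M : Type} [AddCommMonoid M] {t NN MM : ℕ} (ht : 0 < t)
    (hiff : ∀ i : ℕ, t * i < MM ↔ i < NN) (g : ℕ → M) :
    ∑ k ∈ Finset.range MM, (if t ∣ k then g k else 0) = ∑ i ∈ Finset.range NN, g (t * i) := by
  classical
  rw [← Finset.sum_filter]
  refine Finset.sum_nbij' (fun k => k / t) (fun i => t * i) ?_ ?_ ?_ ?_ ?_
  · intro k hk
    simp only [Finset.mem_filter, Finset.mem_range] at hk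
    obtain ⟨hk1, i, rfl⟩ := hk
    simp only [Nat.mul_div_cancel_left i ht]
    exact Finset.mem_range.mpr ((hiff i).mp hk1)
  · intro i hi
    simp only [Finset.mem_range] at hi
    simp only [Finset.mem_filter, Finset.mem_range]
    exact ⟨(hiff i).mpr hi, Dvd.intro i rfl⟩
  · intro k hk
    simp only [Finset.mem_filter, Finset.mem_range] at hk
    exact Nat.mul_div_cancel' hk.2
  · intro i _
    exact Nat.mul_div_cancel_left i ht
  · intro k hk
    simp only [Finset.mem_filter, Finset.mem_range] at hk
    simp only [Nat.mul_div_cancel' hk.2]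

lemma exists_nonroot {K : Type} [Field K] (S : Set K) (Q : Polynomial K) (hQ : Q ≠ 0)
    (h : Q.natDegree < S.ncard) : ∃ y ∈ S, Q.eval y ≠ 0 := by
  classical
  by_contra h'
  push_neg at h'
  have hsub : S ⊆ ↑Q.roots.toFinset := by
    intro y hy
    simp only [Finset.coe_sort_coe, Multiset.mem_toFinset, Finset.mem_coe]
    exact (Polynomial.mem_roots hQ).mpr (h' y hy)
  have h1 := Set.ncard_le_ncard hsub (Q.roots.toFinset.finite_toSet)
  rw [Set.ncard_coe_finset] at h1
  have h2 := (Multiset.toFinset_card_le Q.roots).trans (Polynomial.card_roots' Q)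
  omega

lemma ncard_fixed_le {K : Type} [Field K] {D : ℕ} (hD : 1 < D) :
    {x : K | x ^ D = x}.ncard ≤ D := by
  classical
  set Q : Polynomial K := Polynomial.X ^ D - Polynomial.X with hQdef
  have hQ : Q ≠ 0 := by
    intro h0
    have hco : Q.coeff D = 1 := by
      rw [hQdef, Polynomial.coeff_sub, Polynomial.coeff_X_pow, Polynomial.coeff_X,
        if_pos rfl, if_neg (by omega : ¬ (1 : ℕ) = D)]
      ring
    rw [h0, Polynomial.coeff_zero] at hco
    exact zero_ne_one hco
  have hsub : {x : K | x ^ D = x} ⊆ ↑Q.roots.toFinset := by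
    intro y hy
    simp only [Finset.coe_sort_coe, Multiset.mem_toFinset, Finset.mem_coe]
    refine (Polynomial.mem_roots hQ).mpr ?_
    simp only [Polynomial.IsRoot, hQdef, Polynomial.eval_sub, Polynomial.eval_pow,
      Polynomial.eval_X]
    rw [Set.mem_setOf_eq] at hy
    rw [hy, sub_self]
  have h1 := Set.ncard_le_ncard hsub (Q.roots.toFinset.finite_toSet)
  rw [Set.ncard_coe_finset] at h1
  have h2 := (Multiset.toFinset_card_le Q.roots).trans (Polynomial.card_roots' Q)
  have h3 : Q.natDegree ≤ D := by
    rw [hQdef]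
    refine (Polynomial.natDegree_sub_le _ _).trans ?_
    simp only [Polynomial.natDegree_X_pow, Polynomial.natDegree_X]
    omega
  omega


/-- Rank weight of a vector `v ∈ K^n` over `F_q`. -/
noncomputable def rkw (Fq : Type) [Field Fq] {K : Type} [Field K] [Algebra Fq K] {n : ℕ}
    (v : Fin n → K) : ℕ :=
  Module.finrank Fq ↥(Submodule.span Fq (Set.range v))

/-- Ball of radius `t` around `w` in the rank metric. -/
def ball (Fq : Type) [Field Fq] {K : Type} [Field K] [Algebra Fq K] {n : ℕ}
    (w : Fin n → K) (t : ℕ) : Set (Fin n → K) :=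
  {c : Fin n → K | rkw Fq (w - c) ≤ t}

/-- Minimum rank distance of a code `C ⊆ K^n`. -/
noncomputable def minDist (Fq : Type) [Field Fq] {K : Type} [Field K] [Algebra Fq K] {n : ℕ}
    (C : Set (Fin n → K)) : ℕ :=
  sInf {r : ℕ | ∃ u ∈ C, ∃ v ∈ C, u ≠ v ∧ rkw Fq (u - v) = r}

/-- if `𝒞` contains `(𝒢_{n,n−2t+1,σ})^{σ^j}` for some `j < t−1`, with
`t ∣ n`, `n−2t+1 ≥ 1` and `⌊(d−1)/2⌋+1 ≤ t ≤ d−1`, then there is a word `w ∉ C` with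
`|C ∩ B_t(w)| ≥ (q^n−1)/(q^t−1)`. -/
theorem stmt_13 (q s n m t j : ℕ) (Fq K : Type) [Field Fq] [Fintype Fq] [Field K]
    [Fintype K] [Algebra Fq K]
    (hcard : Fintype.card Fq = q) (hfin : Module.finrank Fq K = m)
    (hn : 0 < n) (hnm : n ∣ m) (hs : Nat.gcd s m = 1)
    (𝒞 : Set (K → K))
    (hlin : ∀ f ∈ 𝒞, ∃ N : ℕ, ∃ a : Fin N → K, ∀ x : K,
      f x = ∑ i : Fin N, a i * x ^ ((q ^ s) ^ (i : ℕ)))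
    (β : K) (hβ : β ≠ 0)
    (α : Fin n → K) (hα : LinearIndependent Fq α)
    (hspan : (Submodule.span Fq (Set.range α) : Set K)
      = (fun y : K => β * y) '' {x : K | x ^ q ^ n = x})
    (C : Set (Fin n → K)) (hC : C = (fun g : K → K => fun i : Fin n => g (α i)) '' 𝒞)
    (d : ℕ) (hd : d = minDist Fq C)
    (ht0 : 0 < t)
    (ht1 : (d - 1) / 2 + 1 ≤ t)
    (ht2 : (t : ℤ) ≤ (d : ℤ) - 1)
    (htn : t ∣ n) (hnt : (1 : ℤ) ≤ (n : ℤ) - 2 * t + 1)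
    (hj : (j : ℤ) < (t : ℤ) - 1)
    (hGab : {f : K → K | ∃ a : Fin (n - 2 * t + 1) → K, ∀ x : K,
        f x = ∑ i, a i * x ^ ((q ^ s) ^ (j + (i : ℕ)))} ⊆ 𝒞) :
    ∃ w : Fin n → K, w ∉ C ∧
      (q ^ n - 1) / (q ^ t - 1) ≤ Nat.card ↥(C ∩ ball Fq w t) := by
  classical
  -- characteristic and cardinalities
  have hq2 : 1 < q := hcard ▸ Fintype.one_lt_card
  set p := ringChar Fq with hpdef
  haveI : CharP Fq p := ringChar.charP Fq
  obtain ⟨apn, hp, hqa0⟩ := FiniteField.card Fq p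
  haveI hfp : Fact p.Prime := ⟨hp⟩
  haveI : CharP K p := charP_of_injective_algebraMap (algebraMap Fq K).injective p
  set a : ℕ := (apn : ℕ) with hadef
  have hqa : q = p ^ a := by rw [← hcard, hqa0]
  have htm : t ∣ m := htn.trans hnm
  have h2tn : 2 * t ≤ n := by exact_mod_cast (by linarith : (2 * t : ℤ) ≤ (n : ℤ))
  set N := n / t with hNdef
  have hnN : n = t * N := (Nat.mul_div_cancel' htn).symm
  have hN2 : 2 ≤ N := (Nat.le_div_iff_mul_le ht0).mpr (by omega)
  have hmK : Fintype.card K = q ^ m := by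
    rw [← hfin, ← hcard]; exact Module.card_eq_pow_finrank
  -- Frobenius powers as ring homs
  set φ : ℕ → K →+* K := fun E => iterateFrobenius K p (a * E) with hφdef
  have hφ : ∀ E (x : K), φ E x = x ^ q ^ E := by
    intro E x
    rw [hφdef]
    simp only [iterateFrobenius_def]
    rw [hqa, ← pow_mul]
  have hadd : ∀ E (x y : K), (x + y) ^ q ^ E = x ^ q ^ E + y ^ q ^ E := by
    intro E x y
    rw [← hφ, ← hφ, ← hφ, map_add]
  have hsub : ∀ E (x y : K), (x - y) ^ q ^ E = x ^ q ^ E - y ^ q ^ E := by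
    intro E x y
    rw [← hφ, ← hφ, ← hφ, map_sub]
  have hsmulpow : ∀ E (c : Fq) (x : K), (c • x) ^ q ^ E = c • x ^ q ^ E := by
    intro E c x
    rw [Algebra.smul_def, Algebra.smul_def, mul_pow, ← map_pow]
    congr 2
    rw [← hcard]
    exact FiniteField.pow_card_pow E c
  have hinj : ∀ E : ℕ, Function.Injective (fun x : K => x ^ q ^ E) := fun E => qpow_inj hqa E
  -- the two fixed sets
  set Fset : Set K := {x : K | x ^ q ^ n = x} with hFdef
  set Eset : Set K := {x : K | x ^ q ^ t = x} with hEdef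
  have hFmul : ∀ x ∈ Fset, ∀ y ∈ Fset, x * y ∈ Fset := by
    intro x hx y hy; simp only [hFdef, Set.mem_setOf_eq, mul_pow] at *; rw [hx, hy]
  have hFsub : ∀ x ∈ Fset, ∀ y ∈ Fset, x - y ∈ Fset := by
    intro x hx y hy
    simp only [hFdef, Set.mem_setOf_eq] at *
    rw [hsub, hx, hy]
  have hFinv : ∀ x ∈ Fset, x⁻¹ ∈ Fset := by
    intro x hx; simp only [hFdef, Set.mem_setOf_eq] at *; rw [inv_pow, hx]
  have hFone : (1 : K) ∈ Fset := by simp [hFdef]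
  have hEmul : ∀ x ∈ Eset, ∀ y ∈ Eset, x * y ∈ Eset := by
    intro x hx y hy; simp only [hEdef, Set.mem_setOf_eq, mul_pow] at *; rw [hx, hy]
  have hEinv : ∀ x ∈ Eset, x⁻¹ ∈ Eset := by
    intro x hx; simp only [hEdef, Set.mem_setOf_eq] at *; rw [inv_pow, hx]
  have hEfixmul : ∀ x ∈ Eset, ∀ k : ℕ, x ^ q ^ (t * k) = x := by
    intro x hx k; exact qpow_fixed_mul hx k
  have hEF : Eset ⊆ Fset := by
    intro x hx
    simp only [hFdef, Set.mem_setOf_eq]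
    rw [hnN]
    exact hEfixmul x hx N
  -- the trace-like map
  set T : K → K := fun z => ∑ i ∈ Finset.range N, z ^ q ^ (s * t * i) with hTdef
  have hT_sub : ∀ z w : K, T (z - w) = T z - T w := by
    intro z w
    simp only [hTdef]
    rw [← Finset.sum_sub_distrib]
    exact Finset.sum_congr rfl fun i _ => hsub _ z w
  have hT_Eset : ∀ z ∈ Fset, T z ∈ Eset := by
    intro z hz
    have hst : (T z) ^ q ^ (s * t) = T z := by
      have h1 : (T z) ^ q ^ (s * t) = ∑ i ∈ Finset.range N, z ^ q ^ (s * t * (i + 1)) := by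
        rw [← hφ, hTdef]
        simp only
        rw [map_sum]
        refine Finset.sum_congr rfl fun i _ => ?_
        rw [hφ, ← pow_mul, ← pow_add,
          show s * t * i + s * t = s * t * (i + 1) from by ring]
      rw [h1, hTdef]
      simp only
      have hNsplit : N = (N - 1) + 1 := by omega
      rw [hNsplit, Finset.sum_range_succ, Finset.sum_range_succ']
      have hlast : z ^ q ^ (s * t * ((N - 1) + 1)) = z := by
        have : s * t * ((N - 1) + 1) = n * s := by
          rw [show (N - 1) + 1 = N from by omega, hnN]; ring
        rw [this]
        exact qpow_fixed_mul hz s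
      rw [hlast]
      have hzero : z ^ q ^ (s * t * 0) = z := by norm_num
      rw [hzero]
    have hm : (T z) ^ q ^ m = T z := by
      rw [← hmK]
      exact FiniteField.pow_card (T z)
    have hgcd : Nat.gcd (s * t) m = t := by
      rw [Nat.Coprime.gcd_mul_left_cancel t hs]
      exact Nat.gcd_eq_left htm
    have := qpow_fixed_gcd hqa hst hm
    rw [hgcd] at this
    exact this
  have hT_scal : ∀ ν ∈ Eset, ∀ z : K, T (ν * z) = ν * T z := by
    intro ν hν z
    simp only [hTdef]
    rw [Finset.mul_sum]
    refine Finset.sum_congr rfl fun i _ => ?_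
    rw [mul_pow]
    congr 1
    have : s * t * i = t * (s * i) := by ring
    rw [this]
    exact hEfixmul ν hν (s * i)
  -- cardinality of Fset
  have hcardF : Fset.ncard = q ^ n := by
    have hspanrank : Module.finrank Fq ↥(Submodule.span Fq (Set.range α)) = n := by
      rw [finrank_span_eq_card hα, Fintype.card_fin]
    haveI : Fintype ↥(Submodule.span Fq (Set.range α)) := Fintype.ofFinite _
    have h1 : Nat.card ↥(Submodule.span Fq (Set.range α)) = q ^ n := by
      rw [Nat.card_eq_fintype_card, Module.card_eq_pow_finrank (K := Fq), hspanrank, hcard]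
    have h2 : ((Submodule.span Fq (Set.range α) : Set K)).ncard = q ^ n := by
      rw [← Nat.card_coe_set_eq]
      exact h1
    rw [hspan] at h2
    rwa [Set.ncard_image_of_injective _ (mul_right_injective₀ hβ)] at h2
  -- nonvanishing of T on Fset
  have hTy : ∃ y ∈ Fset, T y ≠ 0 := by
    set E' : ℕ → ℕ := fun i => (s * t * i) % n with hE'def
    have hE'lt : ∀ i, E' i < n := fun i => Nat.mod_lt _ hn
    have hE'key : ∀ i i' : ℕ, i' ≤ i → i < N → E' i = E' i' → i = i' := by
      intro i i' hle hi he
      have hdvd : n ∣ s * t * i - s * t * i' := by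
        exact (Nat.modEq_iff_dvd' (Nat.mul_le_mul_left _ hle)).mp
          (Nat.ModEq.symm he)
      have h5 : s * t * i - s * t * i' = s * t * (i - i') := by
        have h6 : i' + (i - i') = i := by omega
        calc s * t * i - s * t * i' = s * t * (i' + (i - i')) - s * t * i' := by rw [h6]
          _ = s * t * i' + s * t * (i - i') - s * t * i' := by rw [Nat.mul_add]
          _ = s * t * (i - i') := by omega
      rw [h5, hnN, show s * t * (i - i') = t * (s * (i - i')) from by ring] at hdvd
      have hNdvd : N ∣ s * (i - i') := (mul_dvd_mul_iff_left (by omega : t ≠ 0)).mp hdvd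
      have hNm : N ∣ m := dvd_trans ⟨t, by rw [hnN]; ring⟩ hnm
      have hsN : Nat.Coprime s N := Nat.Coprime.coprime_dvd_right hNm hs
      have hNii : N ∣ (i - i') :=
        Nat.Coprime.dvd_of_dvd_mul_left hsN.symm hNdvd
      rcases Nat.eq_zero_or_pos (i - i') with h0 | h0
      · omega
      · have := Nat.le_of_dvd h0 hNii
        omega
    set Qp : Polynomial K := ∑ i ∈ Finset.range N, Polynomial.X ^ (q ^ E' i) with hQpdef
    have hE'0 : E' 0 = 0 := by simp [hE'def]
    have hQco : Qp.coeff 1 = 1 := by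
      rw [hQpdef, Polynomial.finset_sum_coeff]
      have hz : ∀ i ∈ Finset.range N, i ≠ 0 →
          (Polynomial.X ^ (q ^ E' i) : Polynomial K).coeff 1 = 0 := by
        intro i hi hi0
        rw [Polynomial.coeff_X_pow, if_neg]
        intro h1
        have hE0 : E' i = 0 := by
          by_contra hne
          have h2 : q ≤ q ^ E' i := Nat.le_self_pow hne q
          omega
        exact hi0 (hE'key i 0 (Nat.zero_le i) (Finset.mem_range.mp hi) (by rw [hE0, hE'0]))
      rw [Finset.sum_eq_single_of_mem 0 (Finset.mem_range.mpr (by omega)) hz,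
        Polynomial.coeff_X_pow, if_pos (by rw [hE'0, pow_zero])]
    have hQne : Qp ≠ 0 := by
      intro h0
      rw [h0, Polynomial.coeff_zero] at hQco
      exact zero_ne_one hQco
    have hQdeg : Qp.natDegree < q ^ n := by
      have h1 : Qp.natDegree ≤ q ^ (n - 1) := by
        rw [hQpdef]
        refine (Polynomial.natDegree_sum_le _ _).trans ?_
        rw [Finset.fold_max_le]
        refine ⟨Nat.zero_le _, fun i _ => ?_⟩
        simp only [Function.comp_apply, Polynomial.natDegree_X_pow]
        exact Nat.pow_le_pow_right (by omega) (by have := hE'lt i; omega)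
      have h2 : q ^ (n - 1) < q ^ n := Nat.pow_lt_pow_right hq2 (by omega)
      omega
    obtain ⟨y, hyF, hy0⟩ := exists_nonroot Fset Qp hQne (by rw [hcardF]; exact hQdeg)
    refine ⟨y, hyF, ?_⟩
    have hTQ : T y = Qp.eval y := by
      rw [hTdef, hQpdef]
      simp only [Polynomial.eval_finset_sum, Polynomial.eval_pow, Polynomial.eval_X]
      exact Finset.sum_congr rfl fun i _ => qpow_mod hyF
    rw [hTQ]
    exact hy0
  have hTnd : ∀ δ ∈ Fset, δ ≠ 0 → ∃ y ∈ Fset, T (δ * y) ≠ 0 := by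
    intro δ hδ hδ0
    obtain ⟨y₁, hy₁, hy₁0⟩ := hTy
    refine ⟨δ⁻¹ * y₁, hFmul _ (hFinv _ hδ) _ hy₁, ?_⟩
    rwa [show δ * (δ⁻¹ * y₁) = y₁ by field_simp]
  -- the construction
  set cb : K → K := fun γ => γ * β⁻¹ with hcbdef
  set etop : ℕ := s * (t * (N - 1) + j) with hetopdef
  set lam : K → K := fun γ => ((cb γ) ^ q ^ etop)⁻¹ with hlamdef
  set Mt : K → K → K := fun γ x =>
    ∑ i ∈ Finset.range N, lam γ * (cb γ) ^ q ^ (s * (t * i + j)) * x ^ q ^ (s * (t * i + j))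
    with hMtdef
  set w : Fin n → K := fun i => (α i) ^ q ^ etop with hwdef
  set ff : K → K → K := fun γ x => x ^ q ^ etop - Mt γ x with hffdef
  set cw : K → (Fin n → K) := fun γ => fun i => ff γ (α i) with hcwdef
  have hlamne : ∀ γ : K, γ ≠ 0 → lam γ ≠ 0 := by
    intro γ hγ
    simp only [hlamdef, hcbdef, ne_eq, inv_eq_zero]
    exact pow_ne_zero _ (by simp [hβ, hγ])
  have hlamtop : ∀ γ : K, γ ≠ 0 → lam γ * (cb γ) ^ q ^ etop = 1 := by
    intro γ hγ
    refine inv_mul_cancel₀ ?_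
    exact pow_ne_zero _ (by simp [hcbdef, hβ, hγ])
  -- membership of the constructed polynomials in the code
  have hfmem : ∀ γ : K, γ ≠ 0 → ff γ ∈ 𝒞 := by
    intro γ hγ
    apply hGab
    refine ⟨fun k => if t ∣ (k : ℕ) then -(lam γ * cb γ ^ q ^ (s * (j + (k : ℕ)))) else 0, ?_⟩
    intro x
    have hiff : ∀ i : ℕ, t * i < n - 2 * t + 1 ↔ i < N - 1 := by
      intro i
      have h1 : t * (N - 1) + t = n := by
        have h0 : t * ((N - 1) + 1) = t * (N - 1) + t := Nat.mul_succ t (N - 1)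
        rw [show (N - 1) + 1 = N from by omega] at h0
        omega
      constructor
      · intro h
        by_contra h'
        push_neg at h'
        have h2 := Nat.mul_le_mul_left t h'
        omega
      · intro h
        have h2 := Nat.mul_le_mul_left t (show i ≤ N - 2 from by omega)
        have h3 : t * (N - 2) + t = t * (N - 1) := by
          have h0 : t * ((N - 2) + 1) = t * (N - 2) + t := Nat.mul_succ t (N - 2)
          rw [show (N - 2) + 1 = N - 1 from by omega] at h0
          omega
        omega
    show ff γ x = ∑ i : Fin (n - 2 * t + 1),
      (if t ∣ (i : ℕ) then -(lam γ * cb γ ^ q ^ (s * (j + (i : ℕ)))) else 0)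
        * x ^ (q ^ s) ^ (j + (i : ℕ))
    calc ff γ x
        = -(∑ i ∈ Finset.range (N - 1),
            lam γ * cb γ ^ q ^ (s * (t * i + j)) * x ^ q ^ (s * (t * i + j))) := by
          simp only [hffdef, hMtdef]
          conv_lhs => rw [show N = (N - 1) + 1 from by omega]
          rw [Finset.sum_range_succ, ← hetopdef, hlamtop γ hγ, one_mul]
          ring
      _ = ∑ i ∈ Finset.range (N - 1),
            (-(lam γ * cb γ ^ q ^ (s * (j + t * i)))) * x ^ q ^ (s * (j + t * i)) := by
          rw [← Finset.sum_neg_distrib]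
          refine Finset.sum_congr rfl fun i _ => ?_
          rw [show s * (j + t * i) = s * (t * i + j) from by ring]
          ring
      _ = ∑ k ∈ Finset.range (n - 2 * t + 1), (if t ∣ k then
            (-(lam γ * cb γ ^ q ^ (s * (j + k)))) * x ^ q ^ (s * (j + k)) else 0) := by
          rw [sum_mults ht0 hiff]
      _ = ∑ k ∈ Finset.range (n - 2 * t + 1),
            (if t ∣ k then -(lam γ * cb γ ^ q ^ (s * (j + k))) else 0)
              * x ^ q ^ (s * (j + k)) := by
          refine Finset.sum_congr rfl fun k _ => ?_
          rw [ite_mul, zero_mul]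
      _ = ∑ i : Fin (n - 2 * t + 1),
            (if t ∣ (i : ℕ) then -(lam γ * cb γ ^ q ^ (s * (j + (i : ℕ)))) else 0)
              * x ^ (q ^ s) ^ (j + (i : ℕ)) := by
          rw [← Fin.sum_univ_eq_sum_range (fun k =>
            (if t ∣ k then -(lam γ * cb γ ^ q ^ (s * (j + k))) else 0)
              * x ^ q ^ (s * (j + k))) (n - 2 * t + 1)]
          refine Finset.sum_congr rfl fun i _ => ?_
          rw [← pow_mul]
  have hcwC : ∀ γ : K, γ ≠ 0 → cw γ ∈ C := by
    intro γ hγ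
    rw [hC]
    exact ⟨ff γ, hfmem γ hγ, rfl⟩
  -- evaluation formula on β * F
  have hMtF : ∀ γ y : K, Mt γ (β * y) = lam γ * (T (γ * y)) ^ q ^ (s * j) := by
    intro γ y
    have hcb : cb γ * (β * y) = γ * y := by
      rw [hcbdef]
      field_simp
    calc Mt γ (β * y)
        = ∑ i ∈ Finset.range N, lam γ * (γ * y) ^ q ^ (s * (t * i + j)) := by
          simp only [hMtdef]
          refine Finset.sum_congr rfl fun i _ => ?_
          rw [mul_assoc, ← mul_pow, hcb]
      _ = lam γ * (T (γ * y)) ^ q ^ (s * j) := by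
          rw [← hφ, hTdef]
          simp only
          rw [map_sum, Finset.mul_sum]
          refine Finset.sum_congr rfl fun i _ => ?_
          rw [hφ, ← pow_mul, ← pow_add, show s * t * i + s * j = s * (t * i + j) from by ring]
  -- span transfer
  have hβyspan : ∀ y ∈ Fset, β * y ∈ Submodule.span Fq (Set.range α) := by
    intro y hy
    rw [← SetLike.mem_coe, hspan]
    exact ⟨y, hy, rfl⟩
  have transfer : ∀ c1 c2 : ℕ → K,
      (∀ idx : Fin n, ∑ i ∈ Finset.range N, c1 i * (α idx) ^ q ^ (s * (t * i + j))
        = ∑ i ∈ Finset.range N, c2 i * (α idx) ^ q ^ (s * (t * i + j))) →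
      ∀ z ∈ Submodule.span Fq (Set.range α),
        ∑ i ∈ Finset.range N, c1 i * z ^ q ^ (s * (t * i + j))
          = ∑ i ∈ Finset.range N, c2 i * z ^ q ^ (s * (t * i + j)) := by
    intro c1 c2 hαeq z hz
    induction hz using Submodule.span_induction with
    | mem x hx =>
      obtain ⟨idx, rfl⟩ := hx
      exact hαeq idx
    | zero =>
      refine Finset.sum_congr rfl fun i _ => ?_
      rw [zero_pow (by positivity), mul_zero, mul_zero]
    | add x y hx hy ihx ihy =>
      have hexp : ∀ c : ℕ → K, ∀ u v : K,
          ∑ i ∈ Finset.range N, c i * (u + v) ^ q ^ (s * (t * i + j))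
            = (∑ i ∈ Finset.range N, c i * u ^ q ^ (s * (t * i + j)))
              + ∑ i ∈ Finset.range N, c i * v ^ q ^ (s * (t * i + j)) := by
        intro c u v
        rw [← Finset.sum_add_distrib]
        refine Finset.sum_congr rfl fun i _ => ?_
        rw [hadd, mul_add]
      rw [hexp, hexp, ihx, ihy]
    | smul c x hx ihx =>
      have hexp : ∀ cc : ℕ → K, ∀ u : K,
          ∑ i ∈ Finset.range N, cc i * (c • u) ^ q ^ (s * (t * i + j))
            = c • ∑ i ∈ Finset.range N, cc i * u ^ q ^ (s * (t * i + j)) := by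
        intro cc u
        rw [Finset.smul_sum]
        refine Finset.sum_congr rfl fun i _ => ?_
        rw [hsmulpow, mul_smul_comm]
      rw [hexp, hexp, ihx]
  have hMttransfer : ∀ γ γ' : K, (∀ idx : Fin n, Mt γ (α idx) = Mt γ' (α idx)) →
      ∀ y ∈ Fset, Mt γ (β * y) = Mt γ' (β * y) := by
    intro γ γ' h y hy
    exact transfer _ _ h (β * y) (hβyspan y hy)
  -- ratio lemma
  have ratio : ∀ γ ∈ Fset, γ ≠ 0 → ∀ γ' ∈ Fset, γ' ≠ 0 → cw γ = cw γ' →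
      ∃ ν ∈ Eset, ν ≠ 0 ∧ γ = ν * γ' := by
    intro γ hγF hγ0 γ' hγ'F hγ'0 hcweq
    have hMtα : ∀ idx : Fin n, Mt γ (α idx) = Mt γ' (α idx) := by
      intro idx
      have h1 : ff γ (α idx) = ff γ' (α idx) := congrFun hcweq idx
      simp only [hffdef] at h1
      linear_combination -h1
    have hMtβ : ∀ y ∈ Fset, Mt γ (β * y) = Mt γ' (β * y) := hMttransfer γ γ' hMtα
    have hTeq : ∀ y ∈ Fset,
        lam γ * (T (γ * y)) ^ q ^ (s * j) = lam γ' * (T (γ' * y)) ^ q ^ (s * j) := by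
      intro y hy
      rw [← hMtF, ← hMtF]
      exact hMtβ y hy
    obtain ⟨y₀, hy₀F, hy₀⟩ := hTnd γ' hγ'F hγ'0
    set ν : K := T (γ * y₀) * (T (γ' * y₀))⁻¹ with hνdef
    have hνE : ν ∈ Eset :=
      hEmul _ (hT_Eset _ (hFmul _ hγF _ hy₀F)) _ (hEinv _ (hT_Eset _ (hFmul _ hγ'F _ hy₀F)))
    have hlamγ' : lam γ' = lam γ * ν ^ q ^ (s * j) := by
      have h0 := hTeq y₀ hy₀F
      have hB : (T (γ' * y₀)) ^ q ^ (s * j) ≠ 0 := pow_ne_zero _ hy₀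
      rw [hνdef, mul_pow, inv_pow]
      rw [← mul_assoc, h0, mul_assoc, mul_inv_cancel₀ hB, mul_one]
    have hTall : ∀ y ∈ Fset, T (γ * y) = ν * T (γ' * y) := by
      intro y hy
      have h0 := hTeq y hy
      rw [hlamγ'] at h0
      have hlg : lam γ ≠ 0 := hlamne γ hγ0
      have h1 : (T (γ * y)) ^ q ^ (s * j) = (ν * T (γ' * y)) ^ q ^ (s * j) := by
        rw [mul_pow]
        apply mul_left_cancel₀ hlg
        rw [← mul_assoc]
        exact h0
      exact hinj (s * j) h1
    have hδ : γ - ν * γ' = 0 := by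
      by_contra hδ0
      have hδF : γ - ν * γ' ∈ Fset := hFsub _ hγF _ (hFmul _ (hEF hνE) _ hγ'F)
      obtain ⟨y₁, hy₁F, hy₁⟩ := hTnd _ hδF hδ0
      apply hy₁
      have hdist : (γ - ν * γ') * y₁ = γ * y₁ - ν * (γ' * y₁) := by ring
      rw [hdist, hT_sub, hT_scal ν hνE, hTall y₁ hy₁F, sub_self]
    have hγν : γ = ν * γ' := by linear_combination hδ
    have hν0 : ν ≠ 0 := by
      intro h0
      rw [h0, zero_mul] at hγν
      exact hγ0 hγν
    exact ⟨ν, hνE, hν0, hγν⟩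
  -- ball membership
  have hball : ∀ γ ∈ Fset, γ ≠ 0 → rkw Fq (w - cw γ) ≤ t := by
    intro γ hγF hγ0
    have hwc : w - cw γ = fun idx => Mt γ (α idx) := by
      funext idx
      simp only [Pi.sub_apply, hwdef, hcwdef, hffdef]
      ring
    set g : K →ₗ[Fq] K :=
      { toFun := fun x => lam γ * x ^ q ^ (s * j),
        map_add' := by intro x y; rw [hadd]; ring,
        map_smul' := by
          intro c x
          simp only [RingHom.id_apply]
          rw [hsmulpow, Algebra.smul_def, Algebra.smul_def]
          ring } with hgdef
    set Esub : Submodule Fq K :=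
      { carrier := Eset,
        add_mem' := by
          intro x y hx hy
          simp only [hEdef, Set.mem_setOf_eq] at *
          rw [hadd, hx, hy]
        zero_mem' := by
          simp only [hEdef, Set.mem_setOf_eq]
          rw [zero_pow (by positivity)]
        smul_mem' := by
          intro c x hx
          simp only [hEdef, Set.mem_setOf_eq] at *
          rw [hsmulpow, hx] } with hEsubdef
    have hrange : ∀ idx : Fin n, Mt γ (α idx) ∈ Submodule.map g Esub := by
      intro idx
      obtain ⟨y, hyF, hαy⟩ : ∃ y ∈ Fset, α idx = β * y := by
        have h1 : α idx ∈ (Submodule.span Fq (Set.range α) : Set K) :=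
          Submodule.subset_span (Set.mem_range_self idx)
        rw [hspan] at h1
        obtain ⟨y, hy, hy2⟩ := h1
        exact ⟨y, hy, hy2.symm⟩
      rw [hαy, hMtF]
      exact ⟨T (γ * y), hT_Eset _ (hFmul _ hγF _ hyF), rfl⟩
    have h1 : Submodule.span Fq (Set.range (w - cw γ)) ≤ Submodule.map g Esub := by
      rw [Submodule.span_le]
      rintro _ ⟨idx, rfl⟩
      rw [hwc]
      exact hrange idx
    have h2 : Module.finrank Fq ↥(Submodule.map g Esub) ≤ Module.finrank Fq ↥Esub :=
      Submodule.finrank_map_le g Esub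
    have h3 : Module.finrank Fq ↥Esub ≤ t := by
      haveI : Fintype ↥Esub := Fintype.ofFinite _
      have hc : Fintype.card ↥Esub = q ^ Module.finrank Fq ↥Esub := by
        rw [← hcard]
        exact Module.card_eq_pow_finrank (K := Fq)
      have hcc : Fintype.card ↥Esub ≤ q ^ t := by
        have hle := ncard_fixed_le (K := K) (D := q ^ t)
          (Nat.one_lt_pow (by omega) hq2)
        have he1 : Fintype.card ↥Esub = Eset.ncard := by
          rw [← Nat.card_coe_set_eq, Nat.card_eq_fintype_card]
          congr 1
        rw [he1]
        exact hle
      rw [hc] at hcc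
      exact (Nat.pow_le_pow_iff_right hq2).mp hcc
    have h4 : Module.finrank Fq ↥(Submodule.span Fq (Set.range (w - cw γ)))
        ≤ Module.finrank Fq ↥(Submodule.map g Esub) := Submodule.finrank_mono h1
    calc rkw Fq (w - cw γ)
        = Module.finrank Fq ↥(Submodule.span Fq (Set.range (w - cw γ))) := rfl
      _ ≤ Module.finrank Fq ↥(Submodule.map g Esub) := h4
      _ ≤ Module.finrank Fq ↥Esub := h2
      _ ≤ t := h3
  -- w is not a codeword
  have hwC : w ∉ C := by
    intro hw
    have hc1 : cw 1 ∈ C := hcwC 1 one_ne_zero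
    have hne : w ≠ cw 1 := by
      intro heq
      have hMt0 : ∀ idx : Fin n, Mt 1 (α idx) = 0 := by
        intro idx
        have h1 := congrFun heq idx
        simp only [hwdef, hcwdef, hffdef] at h1
        linear_combination h1
      have h0 : ∀ y ∈ Fset, Mt 1 (β * y) = 0 := by
        intro y hy
        have htr := transfer (fun i => lam 1 * cb 1 ^ q ^ (s * (t * i + j))) (fun _ => 0)
          (fun idx => by
            have h2 := hMt0 idx
            simp only [hMtdef] at h2
            rw [h2]
            simp) (β * y) (hβyspan y hy)
        have hmsum : Mt 1 (β * y)
            = ∑ i ∈ Finset.range N,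
              lam 1 * cb 1 ^ q ^ (s * (t * i + j)) * (β * y) ^ q ^ (s * (t * i + j)) := by
          simp only [hMtdef]
        rw [hmsum] 
        rw [htr]
        simp
      obtain ⟨y, hyF, hTy0⟩ := hTy
      apply hTy0
      have h2 := h0 y hyF
      rw [hMtF] at h2
      have hl1 : lam 1 ≠ 0 := hlamne 1 one_ne_zero
      have h3 : (T (1 * y)) ^ q ^ (s * j) = 0 := by
        rcases mul_eq_zero.mp h2 with h | h
        · exact absurd h hl1
        · exact h
      have h4 : T (1 * y) = 0 :=
        pow_eq_zero_iff (by positivity : q ^ (s * j) ≠ 0) |>.mp h3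
      rwa [one_mul] at h4
    have hdist : rkw Fq (w - cw 1) ≤ t := hball 1 hFone one_ne_zero
    have hdle : d ≤ t := by
      rw [hd]
      calc minDist Fq C ≤ rkw Fq (w - cw 1) := Nat.sInf_le ⟨w, hw, cw 1, hc1, hne, rfl⟩
        _ ≤ t := hdist
    have htd : (t : ℤ) < (d : ℤ) := by linarith
    have htd' : t < d := by exact_mod_cast htd
    omega
  -- counting
  refine ⟨w, hwC, ?_⟩
  set Fs : Finset K := Finset.univ.filter (fun x => x ^ q ^ n = x) with hFsdef
  have hFsSet : (Fs : Set K) = Fset := by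
    ext x
    simp [hFsdef, hFdef]
  set Γ : Finset K := Fs.erase 0 with hΓdef
  have hΓmem : ∀ x, x ∈ Γ ↔ x ∈ Fset ∧ x ≠ 0 := by
    intro x
    rw [hΓdef, Finset.mem_erase]
    constructor
    · rintro ⟨h1, h2⟩
      refine ⟨?_, h1⟩
      rw [← hFsSet]
      exact h2
    · rintro ⟨h1, h2⟩
      refine ⟨h2, ?_⟩
      rw [← Finset.mem_coe, hFsSet]
      exact h1
  have hΓcard : Γ.card = q ^ n - 1 := by
    rw [hΓdef, Finset.card_erase_of_mem]
    · have hfc : Fs.card = q ^ n := by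
        rw [← Set.ncard_coe_finset, hFsSet, hcardF]
      omega
    · rw [hFsdef, Finset.mem_filter]
      exact ⟨Finset.mem_univ 0, zero_pow (by positivity)⟩
  set S : Finset (Fin n → K) := Γ.image cw with hSdef
  set Es : Finset K := (Finset.univ.filter (fun x : K => x ^ q ^ t = x)).erase 0 with hEsdef
  have hEscard : Es.card ≤ q ^ t - 1 := by
    have h1 : (Finset.univ.filter (fun x : K => x ^ q ^ t = x)).card ≤ q ^ t := by
      have h2 := ncard_fixed_le (K := K) (D := q ^ t) (Nat.one_lt_pow (by omega) hq2)
      have h3 : ((Finset.univ.filter (fun x : K => x ^ q ^ t = x)) : Set K)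
          = {x : K | x ^ q ^ t = x} := by
        ext x
        simp
      rw [← h3, Set.ncard_coe_finset] at h2
      exact h2
    have h4 : Es.card = (Finset.univ.filter (fun x : K => x ^ q ^ t = x)).card - 1 := by
      rw [hEsdef, Finset.card_erase_of_mem]
      rw [Finset.mem_filter]
      exact ⟨Finset.mem_univ 0, zero_pow (by positivity)⟩
    omega
  have hfiber : ∀ b ∈ Γ.image cw, (Γ.filter (fun x => cw x = b)).card ≤ q ^ t - 1 := by
    intro b hb
    obtain ⟨γ₀, hγ₀Γ, rfl⟩ := Finset.mem_image.mp hb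
    have hγ₀ := (hΓmem γ₀).mp hγ₀Γ
    refine (Finset.card_le_card_of_injOn (fun x => x * γ₀⁻¹) ?_ ?_).trans hEscard
    · intro γ' hγ'
      simp only [Finset.mem_coe, Finset.mem_filter] at hγ'
      obtain ⟨hγ'Γ, hcw'⟩ := hγ'
      have hγ'p := (hΓmem γ').mp hγ'Γ
      obtain ⟨ν, hνE, hν0, hγν⟩ := ratio γ₀ hγ₀.1 hγ₀.2 γ' hγ'p.1 hγ'p.2 hcw'.symm
      have hval : γ' * γ₀⁻¹ = ν⁻¹ := by
        rw [hγν, mul_inv_rev, ← mul_assoc, mul_inv_cancel₀ hγ'p.2, one_mul]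
      simp only
      rw [hval, hEsdef, Finset.mem_coe, Finset.mem_erase, Finset.mem_filter]
      refine ⟨inv_ne_zero hν0, Finset.mem_univ _, ?_⟩
      exact hEinv ν hνE
    · intro x _ y _ hxy
      simp only at hxy
      exact mul_right_cancel₀ (inv_ne_zero hγ₀.2) hxy
  have hcount : q ^ n - 1 ≤ (q ^ t - 1) * S.card := by
    rw [← hΓcard, hSdef]
    exact Finset.card_le_mul_card_image Γ (q ^ t - 1) hfiber
  have hsub : (S : Set (Fin n → K)) ⊆ C ∩ ball Fq w t := by
    intro b hb
    rw [Finset.mem_coe, hSdef] at hb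
    obtain ⟨γ, hγΓ, rfl⟩ := Finset.mem_image.mp hb
    have hγp := (hΓmem γ).mp hγΓ
    refine ⟨hcwC γ hγp.2, ?_⟩
    show rkw Fq (w - cw γ) ≤ t
    exact hball γ hγp.1 hγp.2
  have h5 : S.card ≤ Nat.card ↥(C ∩ ball Fq w t) := by
    rw [Nat.card_coe_set_eq]
    calc S.card = (S : Set (Fin n → K)).ncard := (Set.ncard_coe_finset S).symm
      _ ≤ (C ∩ ball Fq w t).ncard := Set.ncard_le_ncard hsub (Set.toFinite _)
  have h7 : 0 < q ^ t - 1 := by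
    have h8 : 1 < q ^ t := Nat.one_lt_pow (by omega) hq2
    omega
  have h6 : (q ^ n - 1) / (q ^ t - 1) ≤ S.card := by
    calc (q ^ n - 1) / (q ^ t - 1) ≤ ((q ^ t - 1) * S.card) / (q ^ t - 1) :=
        Nat.div_le_div_right hcount
      _ = S.card := Nat.mul_div_cancel_left _ h7
  exact le_trans h6 h5
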